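/- Let f : R^d → R be L-smooth, x, δ ∈ R^d, and g a random vector with E[g] = ∇f(x+δ) and E[‖g−∇f(x+δ)‖²] ≤ σ². Then E[f(x − ηg)] ≤ f(x) − (η/2)‖∇f(x)‖² − (η/2)(1 − Lη)‖∇f(x+δ)‖² + (η/2)‖∇f(x) − ∇f(x+δ)‖² + (Lη²σ²)/2. -/

import Mathlib

open MeasureTheory

lemma smooth_upper_bound {d : ℕ} (f : EuclideanSpace ℝ (Fin d) → ℝ) (L : ℝ)
    (hL : 0 < L) (hdiff : Differentiable ℝ f)
    (hlip : ∀ x y, ‖gradient f x - gradient f y‖ ≤ L * ‖x - y‖)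
    (x v : EuclideanSpace ℝ (Fin d)) :
    f (x + v) ≤ f x + inner ℝ (gradient f x) v + L / 2 * ‖v‖ ^ 2 := by
  set a : EuclideanSpace ℝ (Fin d) := gradient f x with ha
  set ψ : ℝ → ℝ := fun t => f (x + t • v) - t * (inner ℝ a v : ℝ) - L * t ^ 2 / 2 * ‖v‖ ^ 2
    with hψdef
  have hline : ∀ t : ℝ, HasDerivAt (fun s : ℝ => x + s • v) v t := by
    intro t
    simpa using ((hasDerivAt_id t).smul_const v).const_add x
  have hcomp : ∀ t : ℝ, HasDerivAt (fun s : ℝ => f (x + s • v))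
      (inner ℝ (gradient f (x + t • v)) v : ℝ) t := by
    intro t
    have h1 := (hdiff (x + t • v)).hasGradientAt
    have h2 := h1.hasFDerivAt.comp_hasDerivAt t (hline t)
    simp [InnerProductSpace.toDual_apply_apply] at h2 ⊢
    exact h2
  have hψ : ∀ t : ℝ, HasDerivAt ψ
      ((inner ℝ (gradient f (x + t • v)) v : ℝ) - (inner ℝ a v : ℝ) - L * t * ‖v‖ ^ 2) t := by
    intro t
    have h3 : HasDerivAt (fun t : ℝ => t * (inner ℝ a v : ℝ)) (inner ℝ a v : ℝ) t := by
      simpa using (hasDerivAt_id t).mul_const (inner ℝ a v : ℝ)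
    have h4 : HasDerivAt (fun t : ℝ => L * t ^ 2 / 2 * ‖v‖ ^ 2) (L * t * ‖v‖ ^ 2) t := by
      have : HasDerivAt (fun t : ℝ => t ^ 2) (2 * t) t := by
        simpa using hasDerivAt_pow 2 t
      have := ((this.const_mul L).div_const 2).mul_const (‖v‖ ^ 2)
      rw [show L * t * ‖v‖ ^ 2 = L * (2 * t) / 2 * ‖v‖ ^ 2 by ring]
      exact this
    have h9 := ((hcomp t).sub h3).sub h4
    simp at h9 ⊢
    exact h9
  have hd : ∀ t ∈ Set.Icc (0:ℝ) 1,
      ((inner ℝ (gradient f (x + t • v)) v : ℝ) - (inner ℝ a v : ℝ) - L * t * ‖v‖ ^ 2) ≤ 0 := by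
    intro t ht
    have h5 : (inner ℝ (gradient f (x + t • v)) v : ℝ) - (inner ℝ a v : ℝ)
        = inner ℝ (gradient f (x + t • v) - a) v := by
      rw [inner_sub_left]
    have h6 : (inner ℝ (gradient f (x + t • v) - a) v : ℝ) ≤
        ‖gradient f (x + t • v) - a‖ * ‖v‖ := real_inner_le_norm _ _
    have h7 : ‖gradient f (x + t • v) - a‖ ≤ L * (t * ‖v‖) := by
      have := hlip (x + t • v) x
      simpa [norm_smul, abs_of_nonneg ht.1, mul_assoc] using this
    have hv : (0:ℝ) ≤ ‖v‖ := norm_nonneg _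
    nlinarith [mul_le_mul_of_nonneg_right h7 hv]
  have hmono : AntitoneOn ψ (Set.Icc (0:ℝ) 1) := by
    apply antitoneOn_of_deriv_nonpos (convex_Icc 0 1)
    · exact fun t _ => ((hψ t).differentiableAt.continuousAt).continuousWithinAt
    · exact fun t _ => ((hψ t).differentiableAt).differentiableWithinAt
    · intro t ht
      rw [(hψ t).deriv]
      rw [interior_Icc] at ht
      exact hd t ⟨le_of_lt ht.1, le_of_lt ht.2⟩
  have h01 := hmono (Set.left_mem_Icc.2 zero_le_one) (Set.right_mem_Icc.2 zero_le_one)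
    zero_le_one
  have h0 : ψ 0 = f x := by
    show f (x + (0:ℝ) • v) - 0 * (inner ℝ a v : ℝ) - L * (0:ℝ) ^ 2 / 2 * ‖v‖ ^ 2 = f x
    rw [zero_smul, add_zero]; ring
  have h1 : ψ 1 = f (x + v) - (inner ℝ a v : ℝ) - L / 2 * ‖v‖ ^ 2 := by
    show f (x + (1:ℝ) • v) - 1 * (inner ℝ a v : ℝ) - L * (1:ℝ) ^ 2 / 2 * ‖v‖ ^ 2 = _
    rw [one_smul]; ring
  rw [h0, h1] at h01
  linarith

theorem descent_intermediate (d : ℕ) (f : EuclideanSpace ℝ (Fin d) → ℝ) (L σ η : ℝ)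
    (hL : 0 < L) (hdiff : Differentiable ℝ f)
    (hlip : ∀ x y, ‖gradient f x - gradient f y‖ ≤ L * ‖x - y‖)
    {Ω : Type*} [MeasurableSpace Ω] (μ : Measure Ω) [IsProbabilityMeasure μ]
    (g : Ω → EuclideanSpace ℝ (Fin d)) (x δ : EuclideanSpace ℝ (Fin d))
    (hg_int : Integrable g μ)
    (hg_sq_int : Integrable (fun ω => ‖g ω - gradient f (x + δ)‖ ^ 2) μ)
    (hf_int : Integrable (fun ω => f (x - η • g ω)) μ)
    (hmean : ∫ ω, g ω ∂μ = gradient f (x + δ))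
    (hvar : ∫ ω, ‖g ω - gradient f (x + δ)‖ ^ 2 ∂μ ≤ σ ^ 2)
    (hη : 0 < η) :
    ∫ ω, f (x - η • g ω) ∂μ ≤
      f x - (η / 2) * ‖gradient f x‖ ^ 2
        - (η / 2) * (1 - L * η) * ‖gradient f (x + δ)‖ ^ 2
        + (η / 2) * ‖gradient f x - gradient f (x + δ)‖ ^ 2
        + L * η ^ 2 * σ ^ 2 / 2 := by
  set a : EuclideanSpace ℝ (Fin d) := gradient f x with ha
  set m : EuclideanSpace ℝ (Fin d) := gradient f (x + δ) with hm
  -- pointwise smoothness bound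
  have hpt : ∀ ω, f (x - η • g ω) ≤
      f x - η * (inner ℝ a (g ω) : ℝ) + L * η ^ 2 / 2 * ‖g ω‖ ^ 2 := by
    intro ω
    have := smooth_upper_bound f L hL hdiff hlip x (-(η • g ω))
    have e1 : x + -(η • g ω) = x - η • g ω := by abel
    rw [e1] at this
    calc f (x - η • g ω) ≤ f x + (inner ℝ a (-(η • g ω)) : ℝ) + L / 2 * ‖-(η • g ω)‖ ^ 2 := this
      _ = f x - η * (inner ℝ a (g ω) : ℝ) + L * η ^ 2 / 2 * ‖g ω‖ ^ 2 := by
          rw [inner_neg_right, inner_smul_right, norm_neg, norm_smul]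
          simp [abs_of_nonneg hη.le]
          ring
  -- integrability of ‖g‖²
  have hsq_decomp : (fun ω => ‖g ω‖ ^ 2) =
      fun ω => ‖g ω - m‖ ^ 2 + 2 * (inner ℝ m (g ω - m) : ℝ) + ‖m‖ ^ 2 := by
    funext ω
    have e : ‖g ω‖ ^ 2 = ‖(g ω - m) + m‖ ^ 2 := by rw [sub_add_cancel]
    rw [e, norm_add_sq_real, real_inner_comm]
  have hgm_int : Integrable (fun ω => g ω - m) μ := hg_int.sub (integrable_const m)
  have hinner_int : Integrable (fun ω => (inner ℝ m (g ω - m) : ℝ)) μ := hgm_int.const_inner m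
  have hnormg_sq_int : Integrable (fun ω => ‖g ω‖ ^ 2) μ := by
    rw [hsq_decomp]
    exact (hg_sq_int.add (hinner_int.const_mul 2)).add (integrable_const _)
  have hinner_ag_int : Integrable (fun ω => (inner ℝ a (g ω) : ℝ)) μ := hg_int.const_inner a
  -- integral of ‖g‖²
  have hEgm : ∫ ω, (g ω - m) ∂μ = 0 := by
    rw [integral_sub hg_int (integrable_const m), hmean, integral_const]
    simp
  have hI1 : Integrable (fun ω => ‖g ω - m‖ ^ 2 + 2 * (inner ℝ m (g ω - m) : ℝ)) μ :=
    hg_sq_int.add (hinner_int.const_mul 2)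
  have hI2 : Integrable (fun ω => 2 * (inner ℝ m (g ω - m) : ℝ)) μ := hinner_int.const_mul 2
  have hEsq : ∫ ω, ‖g ω‖ ^ 2 ∂μ ≤ σ ^ 2 + ‖m‖ ^ 2 := by
    rw [hsq_decomp]
    rw [integral_add hI1 (integrable_const _), integral_add hg_sq_int hI2,
      integral_const_mul, integral_inner hgm_int, hEgm, integral_const]
    simp only [inner_zero_right, mul_zero, add_zero, smul_eq_mul, measure_univ,
      ENNReal.toReal_one, probReal_univ, one_mul]
    linarith
  -- integrate the pointwise bound
  have hrhs_int : Integrable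
      (fun ω => f x - η * (inner ℝ a (g ω) : ℝ) + L * η ^ 2 / 2 * ‖g ω‖ ^ 2) μ :=
    ((integrable_const (f x)).sub (hinner_ag_int.const_mul η)).add
      (hnormg_sq_int.const_mul (L * η ^ 2 / 2))
  have hmain : ∫ ω, f (x - η • g ω) ∂μ ≤
      ∫ ω, (f x - η * (inner ℝ a (g ω) : ℝ) + L * η ^ 2 / 2 * ‖g ω‖ ^ 2) ∂μ :=
    integral_mono hf_int hrhs_int hpt
  have hI3 : Integrable (fun ω => f x - η * (inner ℝ a (g ω) : ℝ)) μ :=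
    (integrable_const (f x)).sub (hinner_ag_int.const_mul η)
  have hI4 : Integrable (fun ω => L * η ^ 2 / 2 * ‖g ω‖ ^ 2) μ :=
    hnormg_sq_int.const_mul (L * η ^ 2 / 2)
  have hI5 : Integrable (fun ω => η * (inner ℝ a (g ω) : ℝ)) μ := hinner_ag_int.const_mul η
  have hR : ∫ ω, (f x - η * (inner ℝ a (g ω) : ℝ) + L * η ^ 2 / 2 * ‖g ω‖ ^ 2) ∂μ
      = f x - η * (inner ℝ a m : ℝ) + L * η ^ 2 / 2 * ∫ ω, ‖g ω‖ ^ 2 ∂μ := by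
    rw [integral_add hI3 hI4, integral_sub (integrable_const (f x)) hI5,
      integral_const_mul, integral_inner hg_int, hmean, integral_const_mul, integral_const]
    simp [measure_univ]
  have hpol : (inner ℝ a m : ℝ) = (‖a‖ ^ 2 + ‖m‖ ^ 2 - ‖a - m‖ ^ 2) / 2 := by
    have := norm_sub_sq_real a m
    linarith
  have hc : 0 ≤ L * η ^ 2 / 2 := by positivity
  have hfinal := hmain.trans_eq hR
  have hstep : L * η ^ 2 / 2 * ∫ ω, ‖g ω‖ ^ 2 ∂μ ≤ L * η ^ 2 / 2 * (σ ^ 2 + ‖m‖ ^ 2) :=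
    mul_le_mul_of_nonneg_left hEsq hc
  rw [hpol] at hfinal
  linarith
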